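/- arXiv:1111.0508 — 4 statements merged into one kernel-verified Lean document; each statement's English description precedes it below -/
import Mathlib

section
/- In the SPA model, for the vertex v_i born at time i and every time t ≥ i, the expectation of the shifted in-degree X(v_i,t) = deg⁻(v_i,t) + A_2/A_1 satisfies the recurrence E(X(v_i,t+1)) = (1 + pA_1/t)·E(X(v_i,t)); consequently, for all t ≥ i, E(deg⁻(v_i,t) + A_2/A_1) = (A_2/A_1)·∏_{j=i}^{t−1} (1 + pA_1/j). -/
noncomputable section

/-- The `m`-dimensional unit torus (unit hypercube with the torus metric). -/
abbrev Torus (m : ℕ) := Fin m → AddCircle (1 : ℝ)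

/-- The Spatial Preferred Attachment (SPA) model, presented as a probability space
carrying i.i.d. uniform random seeds `R`: the coordinates of the position of the vertex
born at time `t` (seeds indexed by `Sum.inl (t, j)`) and the link coin flips for the
potential edge from the vertex born at time `t` to the vertex born at time `u`
(seeds indexed by `Sum.inr (t, u)`), together with the edge relation `edge t u`
("the vertex born at time `t` links to the vertex born at time `u`"), which is
determined by the seeds via the defining rule `edge_iff` of the SPA model:
the new vertex `v_t` links to an existing vertex `v_u` (`1 ≤ u < t`) iff it falls in
the sphere of influence of `v_u` at time `t-1` (the ball around `v_u` of volume
`min ((A1 * deg⁻(v_u, t-1) + A2)/(t-1)) 1`, membership in which is expressed by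
`cm * dist ^ m ≤ volume of the sphere`, where `cm` is the constant such that a ball
of radius `r` has volume `cm * r ^ m`) and its coin flip succeeds (probability `p`). -/
structure SPAModel (m : ℕ) (p A1 A2 cm : ℝ) where
  Ω : Type
  [mΩ : MeasurableSpace Ω]
  P : MeasureTheory.Measure Ω
  probP : MeasureTheory.IsProbabilityMeasure P
  R : (ℕ × Fin m) ⊕ (ℕ × ℕ) → Ω → ℝ
  edge : ℕ → ℕ → Ω → Prop
  R_meas : ∀ i, Measurable (R i)
  R_unif : ∀ i, MeasureTheory.Measure.map (R i) P
    = MeasureTheory.volume.restrict (Set.Icc (0:ℝ) 1)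
  indep : ProbabilityTheory.iIndepFun R P
  edge_iff : ∀ t u : ℕ, ∀ ω,
    edge t u ω ↔
      1 ≤ u ∧ u < t ∧
      cm * (dist (fun j => ((R (Sum.inl (t, j)) ω : ℝ) : AddCircle (1:ℝ)))
                 (fun j => ((R (Sum.inl (u, j)) ω : ℝ) : AddCircle (1:ℝ)))) ^ m
        ≤ min ((A1 * ((Set.ncard {s | s ≤ t - 1 ∧ edge s u ω} : ℕ) : ℝ) + A2) / ((t : ℝ) - 1)) 1 ∧
      R (Sum.inr (t, u)) ω ≤ p

attribute [instance] SPAModel.mΩ SPAModel.probP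

namespace SPAModel

variable {m : ℕ} {p A1 A2 cm : ℝ}

/-- Position (in the torus) of the vertex born at time `t`. -/
def pos (M : SPAModel m p A1 A2 cm) (t : ℕ) (ω : M.Ω) : Torus m :=
  fun j => ((M.R (Sum.inl (t, j)) ω : ℝ) : AddCircle (1:ℝ))

/-- In-degree of the vertex born at time `u` in the graph `G_t`. -/
def deg (M : SPAModel m p A1 A2 cm) (u t : ℕ) (ω : M.Ω) : ℕ :=
  Set.ncard {s | s ≤ t ∧ M.edge s u ω}

/-- Volume of the sphere of influence of the vertex born at time `u` at time `t`. -/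
def volS (M : SPAModel m p A1 A2 cm) (u t : ℕ) (ω : M.Ω) : ℝ :=
  min ((A1 * (M.deg u t ω : ℝ) + A2) / (t : ℝ)) 1

/-- `cn u v t`: the number of common in-neighbours of vertices `u` and `v` at time `t`. -/
def cn (M : SPAModel m p A1 A2 cm) (u v t : ℕ) (ω : M.Ω) : ℕ :=
  Set.ncard {s | s ≤ t ∧ M.edge s u ω ∧ M.edge s v ω}

/-- The number of "long" edges (of length at least `r_α = (n^{-α}/cm)^{1/m}`) in `G_n`. -/
def longEdges (M : SPAModel m p A1 A2 cm) (n : ℕ) (α : ℝ) (ω : M.Ω) : ℕ :=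
  Set.ncard {e : ℕ × ℕ | e.1 ≤ n ∧ M.edge e.1 e.2 ω ∧
    (((n : ℝ) ^ (-α)) / cm) ^ (1 / (m : ℝ)) ≤ dist (M.pos e.1 ω) (M.pos e.2 ω)}

end SPAModel
open MeasureTheory
open scoped Classical

variable {m : ℕ} {p A1 A2 cm : ℝ}

/-- ncard of a bounded set of naturals as a filtered card. -/
lemma ncard_le_and (P : ℕ → Prop) (N : ℕ) :
    Set.ncard {s | s ≤ N ∧ P s} = (Finset.filter P (Finset.range (N+1))).card := by
  rw [← Set.ncard_coe_finset]
  congr 1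
  ext s
  simp [Nat.lt_succ_iff, and_comm]

lemma deg_cast_eq_sum (M : SPAModel m p A1 A2 cm) (u N : ℕ) (ω : M.Ω) :
    ((M.deg u N ω : ℕ) : ℝ) = ∑ s ∈ Finset.range (N+1), if M.edge s u ω then (1:ℝ) else 0 := by
  rw [SPAModel.deg, ncard_le_and]
  rw [Finset.card_filter]
  push_cast
  rfl

/-- Edge events are measurable w.r.t. any σ-algebra making the relevant seeds measurable. -/
lemma edge_meas_aux (M : SPAModel m p A1 A2 cm) (T : ℕ) {m' : MeasurableSpace M.Ω}
    (hR1 : ∀ a : ℕ, ∀ j : Fin m, a ≤ T → Measurable[m'] (M.R (Sum.inl (a, j))))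
    (hR2 : ∀ a b : ℕ, a ≤ T → b ≤ T → Measurable[m'] (M.R (Sum.inr (a, b)))) :
    ∀ s, s ≤ T → ∀ u, u ≤ T → MeasurableSet[m'] {ω | M.edge s u ω} := by
  intro s
  induction s using Nat.strong_induction_on with
  | _ s ih =>
    intro hs u hu
    by_cases h1 : 1 ≤ u ∧ u < s
    · have hs1 : 1 ≤ s := lt_of_le_of_lt (Nat.zero_le u) h1.2
      have hdeg : Measurable[m'] (fun ω => ((M.deg u (s-1) ω : ℕ) : ℝ)) := by
        have h : (fun ω => ((M.deg u (s-1) ω : ℕ) : ℝ))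
            = fun ω => ∑ s' ∈ Finset.range (s-1+1), if M.edge s' u ω then (1:ℝ) else 0 := by
          funext ω; exact deg_cast_eq_sum M u (s-1) ω
        rw [h]
        refine Finset.measurable_sum _ (fun s' hs' => ?_)
        have hlt : s' < s := by
          have := Finset.mem_range.mp hs'; omega
        exact Measurable.ite (ih s' hlt (by omega) u hu) measurable_const measurable_const
      have hposs : Measurable[m'] (fun ω => (fun j => ((M.R (Sum.inl (s, j)) ω : ℝ) : AddCircle (1:ℝ)))) := by
        refine measurable_pi_lambda _ (fun j => ?_)
        exact AddCircle.measurable_mk'.comp (hR1 s j hs)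
      have hposu : Measurable[m'] (fun ω => (fun j => ((M.R (Sum.inl (u, j)) ω : ℝ) : AddCircle (1:ℝ)))) := by
        refine measurable_pi_lambda _ (fun j => ?_)
        exact AddCircle.measurable_mk'.comp (hR1 u j hu)
      have hlhs : Measurable[m'] (fun ω => cm * (dist
          (fun j => ((M.R (Sum.inl (s, j)) ω : ℝ) : AddCircle (1:ℝ)))
          (fun j => ((M.R (Sum.inl (u, j)) ω : ℝ) : AddCircle (1:ℝ)))) ^ m) :=
        ((hposs.dist hposu).pow_const m).const_mul cm
      have hrhs : Measurable[m'] (fun ω =>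
          min ((A1 * ((Set.ncard {s' | s' ≤ s - 1 ∧ M.edge s' u ω} : ℕ) : ℝ) + A2) / ((s : ℝ) - 1)) 1) := by
        refine Measurable.min ?_ measurable_const
        exact (((hdeg.const_mul A1).add_const A2).div_const _)
      have hset : {ω | M.edge s u ω} =
          {ω | cm * (dist (fun j => ((M.R (Sum.inl (s, j)) ω : ℝ) : AddCircle (1:ℝ)))
                 (fun j => ((M.R (Sum.inl (u, j)) ω : ℝ) : AddCircle (1:ℝ)))) ^ m
            ≤ min ((A1 * ((Set.ncard {s' | s' ≤ s - 1 ∧ M.edge s' u ω} : ℕ) : ℝ) + A2) / ((s : ℝ) - 1)) 1}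
          ∩ {ω | M.R (Sum.inr (s, u)) ω ≤ p} := by
        ext ω
        rw [Set.mem_setOf_eq, M.edge_iff]
        simp only [Set.mem_inter_iff, Set.mem_setOf_eq]
        tauto
      rw [hset]
      exact (measurableSet_le hlhs hrhs).inter ((hR2 s u hs (le_trans h1.2.le hs)) measurableSet_Iic)
    · have hset : {ω | M.edge s u ω} = ∅ := by
        ext ω; rw [Set.mem_setOf_eq, M.edge_iff]; tauto
      rw [hset]; exact MeasurableSet.empty

lemma deg_meas_aux (M : SPAModel m p A1 A2 cm) (T : ℕ) {m' : MeasurableSpace M.Ω}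
    (hR1 : ∀ a : ℕ, ∀ j : Fin m, a ≤ T → Measurable[m'] (M.R (Sum.inl (a, j))))
    (hR2 : ∀ a b : ℕ, a ≤ T → b ≤ T → Measurable[m'] (M.R (Sum.inr (a, b))))
    (u N : ℕ) (hN : N ≤ T) (hu : u ≤ T) :
    Measurable[m'] (fun ω => ((M.deg u N ω : ℕ) : ℝ)) := by
  have h : (fun ω => ((M.deg u N ω : ℕ) : ℝ))
      = fun ω => ∑ s' ∈ Finset.range (N+1), if M.edge s' u ω then (1:ℝ) else 0 := by
    funext ω; exact deg_cast_eq_sum M u N ω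
  rw [h]
  refine Finset.measurable_sum _ (fun s' hs' => ?_)
  have hs'T : s' ≤ T := by have := Finset.mem_range.mp hs'; omega
  exact Measurable.ite (edge_meas_aux M T hR1 hR2 s' hs'T u hu) measurable_const measurable_const

lemma deg_succ (M : SPAModel m p A1 A2 cm) (u t : ℕ) (ω : M.Ω) :
    ((M.deg u (t+1) ω : ℕ) : ℝ)
      = ((M.deg u t ω : ℕ) : ℝ) + (if M.edge (t+1) u ω then (1:ℝ) else 0) := by
  rw [deg_cast_eq_sum, deg_cast_eq_sum, Finset.sum_range_succ]

lemma deg_le (M : SPAModel m p A1 A2 cm) (u t : ℕ) (ω : M.Ω) : M.deg u t ω ≤ t + 1 := by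
  rw [SPAModel.deg, ncard_le_and]
  calc (Finset.filter (fun s => M.edge s u ω) (Finset.range (t+1))).card
      ≤ (Finset.range (t+1)).card := Finset.card_filter_le _ _
    _ = t + 1 := Finset.card_range _

lemma deg_self (M : SPAModel m p A1 A2 cm) (i : ℕ) (ω : M.Ω) : M.deg i i ω = 0 := by
  rw [SPAModel.deg]
  convert Set.ncard_empty ℕ
  ext s
  simp only [Set.mem_setOf_eq, Set.mem_empty_iff_false, iff_false, not_and]
  intro hs he
  have := ((M.edge_iff s i ω).mp he).2.1
  omega

lemma deg_meas (M : SPAModel m p A1 A2 cm) (u N : ℕ) :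
    Measurable (fun ω => ((M.deg u N ω : ℕ) : ℝ)) :=
  deg_meas_aux M (max u N) (fun a j _ => M.R_meas _) (fun a b _ _ => M.R_meas _)
    u N (le_max_right _ _) (le_max_left _ _)

lemma edge_meas (M : SPAModel m p A1 A2 cm) (s u : ℕ) :
    MeasurableSet {ω | M.edge s u ω} :=
  edge_meas_aux M (max s u) (fun a j _ => M.R_meas _) (fun a b _ _ => M.R_meas _)
    s (le_max_left _ _) u (le_max_right _ _)

lemma deg_integrable (M : SPAModel m p A1 A2 cm) (u N : ℕ) :
    Integrable (fun ω => ((M.deg u N ω : ℕ) : ℝ)) M.P := by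
  refine (integrable_const ((N:ℝ) + 1)).mono' (deg_meas M u N).aestronglyMeasurable ?_
  refine Filter.Eventually.of_forall (fun ω => ?_)
  rw [Real.norm_eq_abs, abs_of_nonneg (by positivity)]
  have := deg_le M u N ω
  exact_mod_cast this

open ProbabilityTheory

/-- The uniform measure on [0,1]. -/
abbrev unif : Measure ℝ := volume.restrict (Set.Icc (0:ℝ) 1)

instance : IsProbabilityMeasure unif := by
  constructor
  rw [Measure.restrict_apply_univ, Real.volume_Icc]
  norm_num

/-- Law of the position seed vector of vertex t. -/
lemma map_N1 (M : SPAModel m p A1 A2 cm) (t : ℕ) :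
    M.P.map (fun ω (j : Fin m) => M.R (Sum.inl (t, j)) ω)
      = Measure.pi (fun _ : Fin m => unif) := by
  have hmeas : Measurable (fun ω (j : Fin m) => M.R (Sum.inl (t, j)) ω) :=
    measurable_pi_lambda _ (fun j => M.R_meas _)
  refine (Measure.pi_eq (fun s hs => ?_)).symm
  rw [Measure.map_apply hmeas (MeasurableSet.univ_pi hs)]
  set F : ((ℕ × Fin m) ⊕ (ℕ × ℕ)) → Set M.Ω := fun k =>
    Sum.rec (fun a => if a.1 = t then M.R (Sum.inl a) ⁻¹' (s a.2) else Set.univ)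
      (fun _ => Set.univ) k with hF
  have hinj : Function.Injective (fun j : Fin m => (Sum.inl (t, j) : (ℕ × Fin m) ⊕ (ℕ × ℕ))) := by
    intro a b h; simpa using h
  have hpre : (fun ω (j : Fin m) => M.R (Sum.inl (t, j)) ω) ⁻¹' (Set.pi Set.univ s)
      = ⋂ k ∈ Finset.image (fun j : Fin m => (Sum.inl (t, j) : (ℕ × Fin m) ⊕ (ℕ × ℕ)))
          Finset.univ, F k := by
    rw [Finset.set_biInter_finset_image]
    ext ω
    simp [hF, Set.mem_pi]
  rw [hpre, M.indep.meas_biInter (fun k hk => ?_), Finset.prod_image (fun a _ b _ h => hinj h)]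
  · have : ∀ j : Fin m, M.P (F (Sum.inl (t, j))) = unif (s j) := by
      intro j
      have : F (Sum.inl (t, j)) = M.R (Sum.inl (t, j)) ⁻¹' (s j) := by simp [hF]
      rw [this, ← Measure.map_apply (M.R_meas _) (hs j), M.R_unif]
    simp only [this]
  · simp only [Finset.mem_image, Finset.mem_univ, true_and] at hk
    obtain ⟨j, rfl⟩ := hk
    have : F (Sum.inl (t, j)) = M.R (Sum.inl (t, j)) ⁻¹' (s j) := by simp [hF]
    rw [this]
    exact ⟨s j, hs j, rfl⟩

lemma pos_meas_aux (M : SPAModel m p A1 A2 cm) {m' : MeasurableSpace M.Ω} (u : ℕ)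
    (hR1 : ∀ j : Fin m, Measurable[m'] (M.R (Sum.inl (u, j)))) :
    Measurable[m'] (fun ω => M.pos u ω) :=
  measurable_pi_iff.mpr (fun j => AddCircle.measurable_mk'.comp (hR1 j))

lemma seeds_vec_meas_aux (M : SPAModel m p A1 A2 cm) {m' : MeasurableSpace M.Ω} (u : ℕ)
    (hR1 : ∀ j : Fin m, Measurable[m'] (M.R (Sum.inl (u, j)))) :
    Measurable[m'] (fun ω (j : Fin m) => M.R (Sum.inl (u, j)) ω) :=
  measurable_pi_iff.mpr (fun j => hR1 j)

lemma prodmk_meas_aux {Ω' β γ : Type*} {m' : MeasurableSpace Ω'} [MeasurableSpace β]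
    [MeasurableSpace γ] {f : Ω' → β} {g : Ω' → γ} (hf : Measurable[m'] f)
    (hg : Measurable[m'] g) : Measurable[m'] (fun ω => (f ω, g ω)) :=
  Measurable.prodMk hf hg

/-- Independence of (deg, pos) at time t from the new seeds of vertex t+1. -/
lemma indep_ZN (M : SPAModel m p A1 A2 cm) (i t : ℕ) (hi : 1 ≤ i) (hit : i ≤ t) :
    IndepFun (fun ω => (((M.deg i t ω : ℕ) : ℝ), M.pos i ω))
      (fun ω => ((fun j => M.R (Sum.inl (t+1, j)) ω, M.R (Sum.inr (t+1, i)) ω)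
        : (Fin m → ℝ) × ℝ)) M.P := by
  classical
  set ι := (ℕ × Fin m) ⊕ (ℕ × ℕ) with hι
  set OldF : Finset ι :=
    ((Finset.range (t+1) ×ˢ (Finset.univ : Finset (Fin m))).image Sum.inl)
      ∪ ((Finset.range (t+1) ×ˢ Finset.range (t+1)).image Sum.inr) with hOldF
  set NewF : Finset ι :=
    ((({t+1} : Finset ℕ) ×ˢ (Finset.univ : Finset (Fin m))).image Sum.inl)
      ∪ {Sum.inr (t+1, i)} with hNewF
  have hOld_time : ∀ k ∈ OldF, (Sum.elim (fun a : ℕ × Fin m => a.1) (fun a : ℕ × ℕ => a.1) k) ≤ t := by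
    intro k hk
    simp only [hOldF, Finset.mem_union, Finset.mem_image] at hk
    rcases hk with ⟨⟨a', j'⟩, hmem, rfl⟩ | ⟨⟨a', b'⟩, hmem, rfl⟩ <;>
      simpa using Nat.lt_succ_iff.mp (Finset.mem_range.mp (Finset.mem_product.mp hmem).1)
  have hNew_time : ∀ k ∈ NewF, (Sum.elim (fun a : ℕ × Fin m => a.1) (fun a : ℕ × ℕ => a.1) k) = t+1 := by
    intro k hk
    simp only [hNewF, Finset.mem_union, Finset.mem_image, Finset.mem_singleton] at hk
    rcases hk with ⟨⟨a', j'⟩, hmem, rfl⟩ | rfl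
    · simpa using (Finset.mem_singleton.mp (Finset.mem_product.mp hmem).1)
    · rfl
  have hdisj : Disjoint OldF NewF := by
    rw [Finset.disjoint_left]
    intro k hk1 hk2
    have := hOld_time k hk1
    rw [hNew_time k hk2] at this
    omega
  have hWV := M.indep.indepFun_finset OldF NewF hdisj M.R_meas
  rw [IndepFun_iff_Indep] at hWV ⊢
  set mW := MeasurableSpace.comap (fun ω (k : OldF) => M.R k.1 ω) MeasurableSpace.pi with hmW
  set mV := MeasurableSpace.comap (fun ω (k : NewF) => M.R k.1 ω) MeasurableSpace.pi with hmV
  have hWm : Measurable[mW] (fun ω (k : OldF) => M.R k.1 ω) := comap_measurable _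
  have hVm : Measurable[mV] (fun ω (k : NewF) => M.R k.1 ω) := comap_measurable _
  have hmemOld1 : ∀ a : ℕ, ∀ j : Fin m, a ≤ t → Sum.inl (a, j) ∈ OldF := by
    intro a j ha
    simp only [hOldF, Finset.mem_union, Finset.mem_image]
    exact Or.inl ⟨(a, j), by simp [Finset.mem_product, Nat.lt_succ_iff, ha], rfl⟩
  have hmemOld2 : ∀ a b : ℕ, a ≤ t → b ≤ t → Sum.inr (a, b) ∈ OldF := by
    intro a b ha hb
    simp only [hOldF, Finset.mem_union, Finset.mem_image]
    exact Or.inr ⟨(a, b), by simp [Finset.mem_product, Nat.lt_succ_iff, ha, hb], rfl⟩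
  have hdegm : Measurable[mW] (fun ω => ((M.deg i t ω : ℕ) : ℝ)) :=
    deg_meas_aux M t
      (fun a j ha => (measurable_pi_apply (⟨Sum.inl (a, j), hmemOld1 a j ha⟩ : OldF)).comp hWm)
      (fun a b ha hb => (measurable_pi_apply (⟨Sum.inr (a, b), hmemOld2 a b ha hb⟩ : OldF)).comp hWm)
      i t le_rfl hit
  have hposm : Measurable[mW] (fun ω => M.pos i ω) :=
    pos_meas_aux M i (fun j =>
      (measurable_pi_apply (⟨Sum.inl (i, j), hmemOld1 i j hit⟩ : OldF)).comp hWm)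
  have hZside : Measurable[mW] (fun ω => (((M.deg i t ω : ℕ) : ℝ), M.pos i ω)) :=
    prodmk_meas_aux hdegm hposm
  have hN1m : Measurable[mV] (fun ω (j : Fin m) => M.R (Sum.inl (t+1, j)) ω) :=
    seeds_vec_meas_aux M (t+1) (fun j =>
      (measurable_pi_apply (⟨Sum.inl (t+1, j), by simp [hNewF]⟩ : NewF)).comp hVm)
  have hN2m : Measurable[mV] (fun ω => M.R (Sum.inr (t+1, i)) ω) :=
    (measurable_pi_apply (⟨Sum.inr (t+1, i), by simp [hNewF]⟩ : NewF)).comp hVm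
  have hNside : Measurable[mV] (fun ω =>
      ((fun j => M.R (Sum.inl (t+1, j)) ω, M.R (Sum.inr (t+1, i)) ω) : (Fin m → ℝ) × ℝ)) :=
    prodmk_meas_aux hN1m hN2m
  exact ProbabilityTheory.indep_of_indep_of_le_left
    (ProbabilityTheory.indep_of_indep_of_le_right hWV hNside.comap_le) hZside.comap_le

lemma indep_N1N2 (M : SPAModel m p A1 A2 cm) (i t : ℕ) :
    IndepFun (fun ω (j : Fin m) => M.R (Sum.inl (t+1, j)) ω)
      (fun ω => M.R (Sum.inr (t+1, i)) ω) M.P := by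
  classical
  set ι := (ℕ × Fin m) ⊕ (ℕ × ℕ) with hι
  set S1 : Finset ι := ((({t+1} : Finset ℕ) ×ˢ (Finset.univ : Finset (Fin m))).image Sum.inl)
    with hS1
  set S2 : Finset ι := {Sum.inr (t+1, i)} with hS2
  have hdisj : Disjoint S1 S2 := by
    rw [Finset.disjoint_left]
    rintro k hk1 hk2
    simp only [hS1, Finset.mem_image] at hk1
    obtain ⟨⟨a, j⟩, _, rfl⟩ := hk1
    simp [hS2] at hk2
  have hWV := M.indep.indepFun_finset S1 S2 hdisj M.R_meas
  rw [IndepFun_iff_Indep] at hWV ⊢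
  have hVm1 : Measurable[MeasurableSpace.comap (fun ω (k : S1) => M.R k.1 ω) MeasurableSpace.pi]
      (fun ω (k : S1) => M.R k.1 ω) := comap_measurable _
  have hVm2 : Measurable[MeasurableSpace.comap (fun ω (k : S2) => M.R k.1 ω) MeasurableSpace.pi]
      (fun ω (k : S2) => M.R k.1 ω) := comap_measurable _
  refine ProbabilityTheory.indep_of_indep_of_le_left
    (ProbabilityTheory.indep_of_indep_of_le_right hWV ?_) ?_
  · exact Measurable.comap_le
      ((measurable_pi_apply (⟨Sum.inr (t+1, i), by simp [hS2]⟩ : S2)).comp hVm2)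
  · refine Measurable.comap_le (seeds_vec_meas_aux M (t+1) (fun j => ?_))
    exact (measurable_pi_apply (⟨Sum.inl (t+1, j), by simp [hS1]⟩ : S1)).comp hVm1

lemma map_N (M : SPAModel m p A1 A2 cm) (i t : ℕ) :
    M.P.map (fun ω => ((fun j => M.R (Sum.inl (t+1, j)) ω, M.R (Sum.inr (t+1, i)) ω)
      : (Fin m → ℝ) × ℝ))
      = (Measure.pi (fun _ : Fin m => unif)).prod unif := by
  have h1 : Measurable (fun ω (j : Fin m) => M.R (Sum.inl (t+1, j)) ω) :=
    measurable_pi_lambda _ (fun j => M.R_meas _)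
  have h2 : Measurable (fun ω => M.R (Sum.inr (t+1, i)) ω) := M.R_meas _
  have h3 : unif = M.P.map (fun ω => M.R (Sum.inr (t+1, i)) ω) := (M.R_unif _).symm
  rw [← map_N1 M (t+1), h3]
  exact ((indepFun_iff_map_prod_eq_prod_map_map h1.aemeasurable h2.aemeasurable).mp
    (indep_N1N2 M i t))

lemma pos_meas (M : SPAModel m p A1 A2 cm) (u : ℕ) : Measurable (fun ω => M.pos u ω) :=
  pos_meas_aux M u (fun j => M.R_meas _)

lemma qmap_measurePreserving :
    MeasurePreserving (fun (x : Fin m → ℝ) (j : Fin m) => ((x j : ℝ) : AddCircle (1:ℝ)))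
      (Measure.pi (fun _ : Fin m => unif)) (volume : Measure (Torus m)) := by
  have h1 : MeasurePreserving ((↑) : ℝ → AddCircle (1:ℝ)) unif volume := by
    have h2 := AddCircle.measurePreserving_mk (1:ℝ) 0
    have h3 : volume.restrict (Set.Ioc (0:ℝ) (0+1)) = unif := by
      rw [zero_add]
      exact Measure.restrict_congr_set MeasureTheory.Ioc_ae_eq_Icc
    rwa [h3] at h2
  rw [show (volume : Measure (Torus m)) = Measure.pi (fun _ : Fin m => volume) from volume_pi]
  exact measurePreserving_pi _ _ (fun _ => h1)

lemma coin_integral (hp0 : 0 < p) (hp1 : p ≤ 1) :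
    ∫ c, (if c ≤ p then (1:ℝ) else 0) ∂unif = p := by
  have h1 : (fun c : ℝ => if c ≤ p then (1:ℝ) else 0) = (Set.Iic p).indicator (fun _ => (1:ℝ)) := by
    funext c; simp [Set.indicator, Set.mem_Iic]
  rw [h1, integral_indicator_const (1:ℝ) measurableSet_Iic]
  rw [measureReal_def, Measure.restrict_apply measurableSet_Iic]
  have h2 : Set.Iic p ∩ Set.Icc (0:ℝ) 1 = Set.Icc 0 p := by
    ext c
    simp only [Set.mem_inter_iff, Set.mem_Iic, Set.mem_Icc]
    constructor
    · rintro ⟨h, h0, _⟩; exact ⟨h0, h⟩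
    · rintro ⟨h0, h⟩; exact ⟨h, h0, le_trans h hp1⟩
  rw [h2, Real.volume_Icc, smul_eq_mul, mul_one, ENNReal.toReal_ofReal (by linarith)]
  ring

open Metric

lemma torus_closedBall_vol {m : ℕ} (x : Torus m) {r : ℝ} (h0 : 0 ≤ r) (h1 : 2*r ≤ 1) :
    volume (Metric.closedBall x r) = ENNReal.ofReal ((2*r)^m) := by
  rw [closedBall_pi _ h0, volume_pi, Measure.pi_pi]
  simp only [AddCircle.volume_closedBall, min_eq_right h1]
  rw [Finset.prod_const, Finset.card_univ, Fintype.card_fin, ← ENNReal.ofReal_pow (by linarith)]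

lemma torus_univ_vol {m : ℕ} : volume (Set.univ : Set (Torus m)) = 1 := by
  have : (Set.univ : Set (Torus m)) = Set.pi Set.univ (fun _ => Set.univ) := by simp
  rw [this, volume_pi, Measure.pi_pi]
  simp [AddCircle.measure_univ]

lemma cm_eq {m : ℕ} {cm : ℝ} (hm : 1 ≤ m)
    (hcm : ∀ x : Torus m, ∀ r : ℝ, 0 ≤ r → r ≤ 1/2 →
      volume (Metric.ball x r) = ENNReal.ofReal (cm * r ^ m)) :
    cm = 2 ^ m := by
  have hx : Nonempty (Torus m) := inferInstance
  obtain ⟨x⟩ := hx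
  have key := hcm x (1/2) (by norm_num) le_rfl
  -- lower positivity
  have h4 : volume (Metric.closedBall x (1/4 : ℝ)) ≤ volume (Metric.ball x (1/2 : ℝ)) :=
    measure_mono (closedBall_subset_ball (by norm_num))
  rw [torus_closedBall_vol x (by norm_num) (by norm_num), key] at h4
  have hpos : (0:ℝ) < cm * (1/2)^m := by
    by_contra hc
    push_neg at hc
    rw [ENNReal.ofReal_eq_zero.mpr hc] at h4
    simp only [nonpos_iff_eq_zero, ENNReal.ofReal_eq_zero] at h4
    have : (0:ℝ) < (2 * (1/4))^m := by positivity
    linarith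
  -- upper bound: ≤ 1
  have hub : cm * (1/2)^m ≤ 1 := by
    have h5 : volume (Metric.ball x (1/2:ℝ)) ≤ volume (Set.univ : Set (Torus m)) :=
      measure_mono (Set.subset_univ _)
    rw [key, torus_univ_vol] at h5
    exact_mod_cast (ENNReal.ofReal_le_one).mp h5
  -- lower bound: ≥ 1 via limit
  have hlb : 1 ≤ cm * (1/2)^m := by
    have hev : ∀ᶠ r' in nhdsWithin (1/2:ℝ) (Set.Iio (1/2)), (2*r')^m ≤ cm * (1/2)^m := by
      filter_upwards [Ioo_mem_nhdsLT_of_mem (Set.mem_Ioc.mpr ⟨by norm_num, le_rfl⟩ :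
        (1/2:ℝ) ∈ Set.Ioc (0:ℝ) (1/2))] with r' hr'
      have h6 : volume (Metric.closedBall x r') ≤ volume (Metric.ball x (1/2:ℝ)) :=
        measure_mono (closedBall_subset_ball hr'.2)
      rw [key, torus_closedBall_vol x hr'.1.le (by linarith [hr'.2])] at h6
      exact (ENNReal.ofReal_le_ofReal_iff hpos.le).mp h6
    have htend : Filter.Tendsto (fun r' : ℝ => (2*r')^m) (nhdsWithin (1/2:ℝ) (Set.Iio (1/2)))
        (nhds ((2*(1/2:ℝ))^m)) :=
      ((continuous_const.mul continuous_id).pow m).continuousWithinAt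
    have := le_of_tendsto htend hev
    norm_num at this
    convert this using 2 <;> norm_num
  have : cm * (1/2)^m = 1 := le_antisymm hub hlb
  field_simp at this
  have h2 : ((1:ℝ)/2)^m * 2^m = 1 := by rw [← mul_pow]; norm_num
  linear_combination (2:ℝ)^m * this - cm * h2

lemma torus_set_vol {m : ℕ} {cm : ℝ} (hm : 1 ≤ m)
    (hcm : ∀ x : Torus m, ∀ r : ℝ, 0 ≤ r → r ≤ 1/2 →
      volume (Metric.ball x r) = ENNReal.ofReal (cm * r ^ m))
    (y : Torus m) {v : ℝ} (hv0 : 0 < v) (hv1 : v ≤ 1) :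
    volume {y' : Torus m | cm * (dist y' y) ^ m ≤ v} = ENNReal.ofReal v := by
  have hcm2 : cm = 2 ^ m := cm_eq hm hcm
  have hm0 : m ≠ 0 := by omega
  set r : ℝ := v ^ (1/(m:ℝ)) / 2 with hr
  have hvr : v ^ (1/(m:ℝ)) = 2 * r := by rw [hr]; ring
  have hrpos : 0 < v ^ (1/(m:ℝ)) := Real.rpow_pos_of_pos hv0 _
  have hrle : v ^ (1/(m:ℝ)) ≤ 1 :=
    Real.rpow_le_one hv0.le hv1 (by positivity)
  have hpow : (2*r) ^ m = v := by
    rw [← hvr, ← Real.rpow_natCast (v ^ (1/(m:ℝ))) m, ← Real.rpow_mul hv0.le]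
    rw [one_div, inv_mul_cancel₀ (by exact_mod_cast hm0), Real.rpow_one]
  have hset : {y' : Torus m | cm * (dist y' y) ^ m ≤ v} = Metric.closedBall y r := by
    ext y'
    simp only [Set.mem_setOf_eq, Metric.mem_closedBall]
    rw [hcm2, ← mul_pow, ← hpow]
    constructor
    · intro h
      have := pow_le_pow_iff_left₀ (by positivity : (0:ℝ) ≤ 2 * dist y' y)
        (by positivity : (0:ℝ) ≤ 2 * r) hm0 |>.mp h
      linarith
    · intro h
      exact pow_le_pow_left₀ (by positivity) (by linarith) m
  rw [hset, torus_closedBall_vol y (by positivity) (by rw [← hvr]; exact hrle), hpow]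

lemma key_integral (M : SPAModel m p A1 A2 cm) (hm : 1 ≤ m)
    (hcm : ∀ x : Torus m, ∀ r : ℝ, 0 ≤ r → r ≤ 1/2 →
      volume (Metric.ball x r) = ENNReal.ofReal (cm * r ^ m))
    (hp0 : 0 < p) (hp1 : p ≤ 1) (hA1 : 0 < A1) (hA2 : 0 < A2)
    (i t : ℕ) (hi : 1 ≤ i) (hit : i ≤ t)
    (hcap : ∀ ω : M.Ω, (A1 * ((M.deg i t ω : ℕ) : ℝ) + A2) / (t : ℝ) ≤ 1) :
    ∫ ω, (if M.edge (t+1) i ω then (1:ℝ) else 0) ∂M.P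
      = ∫ ω, p * ((A1 * ((M.deg i t ω : ℕ) : ℝ) + A2) / (t : ℝ)) ∂M.P := by
  have ht1 : 1 ≤ t := le_trans hi hit
  have ht0 : (0:ℝ) < t := by exact_mod_cast ht1
  set q : (Fin m → ℝ) → Torus m := fun x j => ((x j : ℝ) : AddCircle (1:ℝ)) with hq
  set Z : M.Ω → ℝ × Torus m := fun ω => (((M.deg i t ω : ℕ) : ℝ), M.pos i ω) with hZdef
  set N : M.Ω → (Fin m → ℝ) × ℝ := fun ω =>
    ((fun j => M.R (Sum.inl (t+1, j)) ω, M.R (Sum.inr (t+1, i)) ω)) with hNdef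
  set φ : (ℝ × Torus m) × ((Fin m → ℝ) × ℝ) → ℝ := fun zn =>
    (if cm * (dist (q zn.2.1) zn.1.2) ^ m ≤ (A1 * zn.1.1 + A2) / (t:ℝ) then (1:ℝ) else 0)
    * (if zn.2.2 ≤ p then (1:ℝ) else 0) with hφdef
  -- measurability
  have hqmeas : Measurable q :=
    measurable_pi_lambda _ (fun j => AddCircle.measurable_mk'.comp (measurable_pi_apply j))
  have hZmeas : Measurable Z := (deg_meas M i t).prodMk (pos_meas M i)
  have hNmeas : Measurable N :=
    (measurable_pi_lambda _ (fun j => M.R_meas _)).prodMk (M.R_meas _)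
  have hφmeas : Measurable φ := by
    rw [hφdef]
    refine Measurable.mul ?_ ?_
    · refine Measurable.ite ?_ measurable_const measurable_const
      refine measurableSet_le ?_ ?_
      · exact (((hqmeas.comp (measurable_fst.comp measurable_snd)).dist
          (measurable_snd.comp measurable_fst)).pow_const m).const_mul cm
      · exact (((measurable_fst.comp measurable_fst).const_mul A1).add_const A2).div_const _
    · exact Measurable.ite ((measurable_snd.comp measurable_snd) measurableSet_Iic)
        measurable_const measurable_const
  -- pointwise identity
  have hpoint : ∀ ω, (if M.edge (t+1) i ω then (1:ℝ) else 0) = φ (Z ω, N ω) := by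
    intro ω
    have hedge : M.edge (t+1) i ω ↔
        (cm * (dist (q (N ω).1) (Z ω).2) ^ m ≤ (A1 * (Z ω).1 + A2) / (t:ℝ)
          ∧ (N ω).2 ≤ p) := by
      rw [M.edge_iff]
      have hd : {s | s ≤ t + 1 - 1 ∧ M.edge s i ω} = {s | s ≤ t ∧ M.edge s i ω} := by simp
      have hcast : ((t + 1 : ℕ) : ℝ) - 1 = (t : ℝ) := by push_cast; ring
      rw [hd, hcast]
      have hmin : min ((A1 * ((Set.ncard {s | s ≤ t ∧ M.edge s i ω} : ℕ) : ℝ) + A2) / (t:ℝ)) 1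
          = (A1 * ((M.deg i t ω : ℕ) : ℝ) + A2) / (t:ℝ) := by
        rw [show (Set.ncard {s | s ≤ t ∧ M.edge s i ω} : ℕ) = M.deg i t ω from rfl]
        exact min_eq_left (hcap ω)
      rw [hmin]
      constructor
      · rintro ⟨_, _, h3, h4⟩; exact ⟨h3, h4⟩
      · rintro ⟨h3, h4⟩; exact ⟨hi, by omega, h3, h4⟩
    simp only [hφdef]
    by_cases he : M.edge (t+1) i ω
    · obtain ⟨h3, h4⟩ := hedge.mp he
      simp only [he, if_pos h3, if_pos h4, if_true, mul_one]
    · have hne := (not_iff_not.mpr hedge).mp he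
      rw [if_neg he]
      by_cases h3 : cm * (dist (q (N ω).1) (Z ω).2) ^ m ≤ (A1 * (Z ω).1 + A2) / (t:ℝ)
      · have h4 : ¬ (N ω).2 ≤ p := fun h4 => hne ⟨h3, h4⟩
        rw [if_pos h3, if_neg h4, mul_zero]
      · rw [if_neg h3, zero_mul]
  -- instances
  haveI hprobZ : IsProbabilityMeasure (M.P.map Z) := Measure.isProbabilityMeasure_map hZmeas.aemeasurable
  haveI : IsProbabilityMeasure (volume : Measure (Torus m)) := ⟨torus_univ_vol⟩
  -- law identity
  have hmap : M.P.map (fun ω => (Z ω, N ω))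
      = (M.P.map Z).prod ((Measure.pi (fun _ : Fin m => unif)).prod unif) := by
    rw [← map_N M i t]
    exact (indepFun_iff_map_prod_eq_prod_map_map hZmeas.aemeasurable hNmeas.aemeasurable).mp
      (indep_ZN M i t hi hit)
  -- integrability of φ
  have hφint : Integrable φ ((M.P.map Z).prod ((Measure.pi (fun _ : Fin m => unif)).prod unif)) := by
    refine (integrable_const (1:ℝ)).mono' hφmeas.aestronglyMeasurable ?_
    refine Filter.Eventually.of_forall (fun zn => ?_)
    rw [hφdef, Real.norm_eq_abs]
    by_cases h3 : cm * (dist (q zn.2.1) zn.1.2) ^ m ≤ (A1 * zn.1.1 + A2) / (t:ℝ) <;>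
      by_cases h4 : zn.2.2 ≤ p <;> simp [h3, h4]
  -- inner integral computation
  have hinner : ∀ z : ℝ × Torus m, 0 ≤ z.1 → (A1 * z.1 + A2) / (t:ℝ) ≤ 1 →
      ∫ n, φ (z, n) ∂((Measure.pi (fun _ : Fin m => unif)).prod unif)
        = ((A1 * z.1 + A2) / (t:ℝ)) * p := by
    intro z hz1 hz2
    have hv0 : 0 < (A1 * z.1 + A2) / (t:ℝ) := by
      apply div_pos _ ht0
      have : 0 ≤ A1 * z.1 := mul_nonneg hA1.le hz1
      linarith
    have hgmeas : Measurable (fun y : Torus m =>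
        if cm * (dist y z.2) ^ m ≤ (A1 * z.1 + A2) / (t:ℝ) then (1:ℝ) else 0) := by
      refine Measurable.ite ?_ measurable_const measurable_const
      refine measurableSet_le ?_ measurable_const
      exact ((measurable_dist.comp (measurable_id.prodMk measurable_const)).pow_const m).const_mul cm
    have hE : MeasurableSet {y : Torus m | cm * (dist y z.2) ^ m ≤ (A1 * z.1 + A2) / (t:ℝ)} := by
      refine measurableSet_le ?_ measurable_const
      exact ((measurable_dist.comp (measurable_id.prodMk measurable_const)).pow_const m).const_mul cm
    have hsplit : ∫ n, φ (z, n) ∂((Measure.pi (fun _ : Fin m => unif)).prod unif)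
        = (∫ x, (if cm * (dist (q x) z.2) ^ m ≤ (A1 * z.1 + A2) / (t:ℝ) then (1:ℝ) else 0)
            ∂(Measure.pi (fun _ : Fin m => unif)))
          * ∫ c, (if c ≤ p then (1:ℝ) else 0) ∂unif :=
      integral_prod_mul
        (fun x : Fin m → ℝ =>
          if cm * (dist (q x) z.2) ^ m ≤ (A1 * z.1 + A2) / (t:ℝ) then (1:ℝ) else 0)
        (fun c : ℝ => if c ≤ p then (1:ℝ) else 0)
    rw [hsplit, coin_integral hp0 hp1]
    congr 1
    have h1 : ∫ x, (if cm * (dist (q x) z.2) ^ m ≤ (A1 * z.1 + A2) / (t:ℝ) then (1:ℝ) else 0)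
          ∂(Measure.pi (fun _ : Fin m => unif))
        = ∫ y, (if cm * (dist y z.2) ^ m ≤ (A1 * z.1 + A2) / (t:ℝ) then (1:ℝ) else 0)
          ∂(Measure.map q (Measure.pi (fun _ : Fin m => unif))) :=
      (integral_map hqmeas.aemeasurable hgmeas.aestronglyMeasurable).symm
    rw [h1, qmap_measurePreserving.map_eq]
    have hind : (fun y : Torus m =>
        if cm * (dist y z.2) ^ m ≤ (A1 * z.1 + A2) / (t:ℝ) then (1:ℝ) else 0)
        = Set.indicator {y : Torus m | cm * (dist y z.2) ^ m ≤ (A1 * z.1 + A2) / (t:ℝ)}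
            (fun _ => (1:ℝ)) := by
      funext y; simp [Set.indicator, Set.mem_setOf_eq]
    rw [hind, integral_indicator_const (1:ℝ) hE, measureReal_def, torus_set_vol hm hcm z.2 hv0 hz2,
      smul_eq_mul, mul_one, ENNReal.toReal_ofReal hv0.le]
  -- almost-everywhere constraint on Z's law
  have hGmeas : MeasurableSet {z : ℝ × Torus m | 0 ≤ z.1 ∧ (A1 * z.1 + A2) / (t:ℝ) ≤ 1} := by
    refine MeasurableSet.inter ?_ ?_
    · exact measurableSet_le measurable_const measurable_fst
    · exact measurableSet_le (((measurable_fst.const_mul A1).add_const A2).div_const _)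
        measurable_const
  have hae : ∀ᵐ z ∂(M.P.map Z), 0 ≤ z.1 ∧ (A1 * z.1 + A2) / (t:ℝ) ≤ 1 := by
    rw [ae_map_iff hZmeas.aemeasurable hGmeas]
    refine Filter.Eventually.of_forall (fun ω => ?_)
    exact ⟨by positivity, hcap ω⟩
  -- put everything together
  have hfinal1 : (fun ω => if M.edge (t+1) i ω then (1:ℝ) else 0)
      = fun ω => φ (Z ω, N ω) := funext hpoint
  rw [hfinal1]
  have hstep2 : ∫ ω, φ (Z ω, N ω) ∂M.P
      = ∫ x, φ x ∂((M.P.map Z).prod ((Measure.pi (fun _ : Fin m => unif)).prod unif)) := by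
    rw [← hmap]
    exact (integral_map (hZmeas.prodMk hNmeas).aemeasurable hφmeas.aestronglyMeasurable).symm
  rw [hstep2, integral_prod _ hφint]
  have hstep3 : ∫ z, (∫ n, φ (z, n) ∂((Measure.pi (fun _ : Fin m => unif)).prod unif))
        ∂(M.P.map Z)
      = ∫ z, ((A1 * z.1 + A2) / (t:ℝ)) * p ∂(M.P.map Z) := by
    refine integral_congr_ae ?_
    filter_upwards [hae] with z hz
    exact hinner z hz.1 hz.2
  rw [hstep3]
  have hstep4 : ∫ z, ((A1 * z.1 + A2) / (t:ℝ)) * p ∂(M.P.map Z)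
      = ∫ ω, ((A1 * (Z ω).1 + A2) / (t:ℝ)) * p ∂M.P := by
    refine integral_map hZmeas.aemeasurable ?_
    exact ((((measurable_fst.const_mul A1).add_const A2).div_const _).mul_const p).aestronglyMeasurable
  rw [hstep4]
  refine integral_congr_ae (Filter.Eventually.of_forall (fun ω => ?_))
  rw [hZdef]
  ring


open MeasureTheory ProbabilityTheory Real Filter
/-- In the SPA model, for the vertex v_i born at time i and every t ≥ i,
the expectation of the shifted in-degree X(v_i,t) = deg⁻(v_i,t) + A₂/A₁ satisfies
E(X(v_i,t+1)) = (1 + pA₁/t)·E(X(v_i,t)); consequently, for all t ≥ i,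
E(deg⁻(v_i,t) + A₂/A₁) = (A₂/A₁)·∏_{j=i}^{t−1} (1 + pA₁/j).
(The probability p·|S(v_i,t)| = p·(A₁·deg⁻(v_i,t)+A₂)/t of receiving a new in-neighbour
is assumed to be at most 1; i.e. the sphere of influence is not capped at the whole
space, so that (A₁·deg⁻(v_i,t)+A₂)/t ≤ 1, whence also p·(A₁·deg⁻(v_i,t)+A₂)/t ≤ 1.) -/
theorem spa_expected_in_degree_recurrence
    (m : ℕ) (hm : 1 ≤ m) (p A1 A2 cm : ℝ)
    (hp0 : 0 < p) (hp1 : p ≤ 1) (hA1 : 0 < A1) (hA2 : 0 < A2) (hpA1 : p * A1 < 1)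
    (hcm : ∀ x : Torus m, ∀ r : ℝ, 0 ≤ r → r ≤ 1/2 →
      volume (Metric.ball x r) = ENNReal.ofReal (cm * r ^ m))
    (M : SPAModel m p A1 A2 cm)
    (i : ℕ) (hi : 1 ≤ i)
    (hcap : ∀ t : ℕ, i ≤ t → ∀ ω : M.Ω, (A1 * (M.deg i t ω : ℝ) + A2) / (t : ℝ) ≤ 1) :
    (∀ t : ℕ, i ≤ t →
      (∫ ω, ((M.deg i (t + 1) ω : ℝ) + A2 / A1) ∂M.P)
        = (1 + p * A1 / (t : ℝ)) * ∫ ω, ((M.deg i t ω : ℝ) + A2 / A1) ∂M.P) ∧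
    (∀ t : ℕ, i ≤ t →
      (∫ ω, ((M.deg i t ω : ℝ) + A2 / A1) ∂M.P)
        = (A2 / A1) * ∏ j ∈ Finset.Ico i t, (1 + p * A1 / (j : ℝ))) := by
  have hint_deg : ∀ t : ℕ, Integrable (fun ω => ((M.deg i t ω : ℕ) : ℝ)) M.P :=
    fun t => deg_integrable M i t
  have hint_X : ∀ t : ℕ, Integrable (fun ω => ((M.deg i t ω : ℕ) : ℝ) + A2 / A1) M.P :=
    fun t => (hint_deg t).add (integrable_const _)
  have part1 : ∀ t : ℕ, i ≤ t →
      (∫ ω, ((M.deg i (t + 1) ω : ℝ) + A2 / A1) ∂M.P)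
        = (1 + p * A1 / (t : ℝ)) * ∫ ω, ((M.deg i t ω : ℝ) + A2 / A1) ∂M.P := by
    intro t ht
    have ht0 : (0:ℝ) < t := by exact_mod_cast le_trans hi ht
    have hitemeas : Measurable (fun ω => if M.edge (t+1) i ω then (1:ℝ) else 0) :=
      Measurable.ite (edge_meas M (t+1) i) measurable_const measurable_const
    have hite_int : Integrable (fun ω => if M.edge (t+1) i ω then (1:ℝ) else 0) M.P := by
      refine (integrable_const (1:ℝ)).mono' hitemeas.aestronglyMeasurable ?_
      refine Eventually.of_forall (fun ω => ?_)
      by_cases h : M.edge (t+1) i ω <;> simp [h]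
    have hsplit : (fun ω => ((M.deg i (t+1) ω : ℕ) : ℝ) + A2 / A1)
        = fun ω => (((M.deg i t ω : ℕ) : ℝ) + A2 / A1)
            + (if M.edge (t+1) i ω then (1:ℝ) else 0) := by
      funext ω
      rw [deg_succ M i t ω]
      ring
    rw [hsplit, integral_add (hint_X t) hite_int,
      key_integral M hm hcm hp0 hp1 hA1 hA2 i t hi ht (hcap t ht)]
    have hlin : (fun ω => p * ((A1 * ((M.deg i t ω : ℕ) : ℝ) + A2) / (t:ℝ)))
        = fun ω => (p * A1 / (t:ℝ)) * ((M.deg i t ω : ℕ) : ℝ) + p * A2 / (t:ℝ) := by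
      funext ω
      field_simp
    rw [hlin, integral_add (((hint_deg t).const_mul _)) (integrable_const _),
      MeasureTheory.integral_const_mul, integral_add (hint_deg t) (integrable_const _)]
    simp only [integral_const, measure_univ, ENNReal.toReal_one, one_smul, smul_eq_mul]
    set I : ℝ := ∫ ω, ((M.deg i t ω : ℕ) : ℝ) ∂M.P
    field_simp
  refine ⟨part1, ?_⟩
  intro t ht
  induction t, ht using Nat.le_induction with
  | base =>
    have hz : (fun ω => ((M.deg i i ω : ℕ) : ℝ) + A2 / A1) = fun _ => A2 / A1 := by
      funext ω; rw [deg_self M i ω]; simp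
    rw [hz, integral_const, Finset.Ico_self, Finset.prod_empty]
    simp [measure_univ]
  | succ t ht ih =>
    rw [part1 t ht, ih, Finset.prod_Ico_succ_top ht]
    ring
end
end

section
/- Let p ∈ (0,1] and A_1, A_2 > 0 be reals. For every integer k ≥ 0, define c_k = p^k/(1 + k·pA_1 + pA_2) · ∏_{j=0}^{k−1} (j·A_1 + A_2)/(1 + j·pA_1 + pA_2) (so c_0 = 1/(1+pA_2)). Then c_k = (1/(pA_1)) · [Γ(k + A_2/A_1)/Γ(A_2/A_1)] / [Γ(k + 1 + A_2/A_1 + 1/(pA_1))/Γ(A_2/A_1 + 1/(pA_1))], where Γ is the real Gamma function. -/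
/-- For p ∈ (0,1], A₁, A₂ > 0 and k ≥ 0, the limiting in-degree
distribution coefficient c_k = p^k/(1 + k·pA₁ + pA₂)·∏_{j=0}^{k−1}(jA₁+A₂)/(1+j·pA₁+pA₂)
satisfies c_k = (1/(pA₁))·[Γ(k + A₂/A₁)/Γ(A₂/A₁)]/[Γ(k+1+A₂/A₁+1/(pA₁))/Γ(A₂/A₁+1/(pA₁))]. -/
theorem spa_ck_gamma_formula (p A1 A2 : ℝ) (hp0 : 0 < p) (hp1 : p ≤ 1)
    (hA1 : 0 < A1) (hA2 : 0 < A2) (k : ℕ) :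
    p ^ k / (1 + (k : ℝ) * (p * A1) + p * A2) *
        ∏ j ∈ Finset.range k, (((j : ℝ) * A1 + A2) / (1 + (j : ℝ) * (p * A1) + p * A2))
      = (1 / (p * A1)) *
          ((Real.Gamma ((k : ℝ) + A2 / A1) / Real.Gamma (A2 / A1)) /
            (Real.Gamma ((k : ℝ) + 1 + A2 / A1 + 1 / (p * A1)) /
              Real.Gamma (A2 / A1 + 1 / (p * A1)))) := by
  have hpA1 : 0 < p * A1 := mul_pos hp0 hA1
  have ha : (0:ℝ) < A2 / A1 := div_pos hA2 hA1
  have hb : (0:ℝ) < A2 / A1 + 1 / (p * A1) := by positivity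
  have hGa := (Real.Gamma_pos_of_pos ha).ne'
  have hGb := (Real.Gamma_pos_of_pos hb).ne'
  induction k with
  | zero =>
    simp only [Nat.cast_zero, pow_zero, Finset.range_zero, Finset.prod_empty, mul_one,
      zero_mul, zero_add]
    rw [show (1:ℝ) + A2 / A1 + 1 / (p * A1) = (A2 / A1 + 1 / (p * A1)) + 1 by ring,
        Real.Gamma_add_one hb.ne']
    have hd : (0:ℝ) < 1 + p * A2 := by positivity
    field_simp
    ring
  | succ k ih =>
    have hka : (0:ℝ) < (k:ℝ) + A2 / A1 := by positivity
    have hkb : (0:ℝ) < (k:ℝ) + 1 + A2 / A1 + 1 / (p * A1) := by positivity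
    have hGka := (Real.Gamma_pos_of_pos hka).ne'
    have hGkb := (Real.Gamma_pos_of_pos hkb).ne'
    have hDk : (0:ℝ) < 1 + (k:ℝ) * (p * A1) + p * A2 := by positivity
    have hDk1 : (0:ℝ) < 1 + ((k:ℝ) + 1) * (p * A1) + p * A2 := by positivity
    have hpk : (p:ℝ) ^ k ≠ 0 := (pow_pos hp0 k).ne'
    have hP : ∏ j ∈ Finset.range k,
        (((j : ℝ) * A1 + A2) / (1 + (j : ℝ) * (p * A1) + p * A2))
        = (1 + (k:ℝ) * (p * A1) + p * A2) / p ^ k *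
          ((1 / (p * A1)) *
          ((Real.Gamma ((k : ℝ) + A2 / A1) / Real.Gamma (A2 / A1)) /
            (Real.Gamma ((k : ℝ) + 1 + A2 / A1 + 1 / (p * A1)) /
              Real.Gamma (A2 / A1 + 1 / (p * A1))))) := by
      rw [← ih]
      field_simp
      ring_nf
      exact Finset.prod_congr rfl (fun x _ => by ring)
    have e1 : ((k+1:ℕ):ℝ) + A2 / A1 = ((k:ℝ) + A2 / A1) + 1 := by push_cast; ring
    have e2 : ((k+1:ℕ):ℝ) + 1 + A2 / A1 + 1 / (p * A1)
        = ((k:ℝ) + 1 + A2 / A1 + 1 / (p * A1)) + 1 := by push_cast; ring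
    rw [Finset.prod_range_succ, hP, e1, e2, Real.Gamma_add_one hka.ne',
        Real.Gamma_add_one hkb.ne']
    push_cast
    field_simp
    ring
end

section
/- Let p ∈ (0,1] and A_1, A_2 > 0 be reals. With c_k = p^k/(1 + k·pA_1 + pA_2) · ∏_{j=0}^{k−1} (j·A_1 + A_2)/(1 + j·pA_1 + pA_2), one has lim_{k→∞} c_k · k^{1+1/(pA_1)} = (1/(pA_1)) · Γ(A_2/A_1 + 1/(pA_1)) / Γ(A_2/A_1); that is, c_k = (1+o(1)) · c · k^{−1−1/(pA_1)} as k → ∞, where c = (1/(pA_1)) · Γ(A_2/A_1 + 1/(pA_1)) / Γ(A_2/A_1). -/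
open Filter

/-- For p ∈ (0,1], A₁, A₂ > 0, the coefficients
c_k = p^k/(1 + k·pA₁ + pA₂)·∏_{j=0}^{k−1}(jA₁+A₂)/(1+j·pA₁+pA₂) satisfy
lim_{k→∞} c_k·k^{1+1/(pA₁)} = (1/(pA₁))·Γ(A₂/A₁ + 1/(pA₁))/Γ(A₂/A₁). -/
theorem spa_ck_power_law_asymptotics (p A1 A2 : ℝ) (hp0 : 0 < p) (hp1 : p ≤ 1)
    (hA1 : 0 < A1) (hA2 : 0 < A2) :
    Tendsto
      (fun k : ℕ =>
        (p ^ k / (1 + (k : ℝ) * (p * A1) + p * A2) *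
            ∏ j ∈ Finset.range k, (((j : ℝ) * A1 + A2) / (1 + (j : ℝ) * (p * A1) + p * A2)))
          * (k : ℝ) ^ (1 + 1 / (p * A1)))
      atTop
      (nhds ((1 / (p * A1)) * (Real.Gamma (A2 / A1 + 1 / (p * A1)) / Real.Gamma (A2 / A1)))) := by
  set a : ℝ := A2 / A1 with ha_def
  set b : ℝ := a + 1 / (p * A1) with hb_def
  have hpA1 : 0 < p * A1 := mul_pos hp0 hA1
  have ha : 0 < a := div_pos hA2 hA1
  have hb : 0 < b := by positivity
  have hp' : p ≠ 0 := hp0.ne'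
  have hA1' : A1 ≠ 0 := hA1.ne'
  have key : ∀ k : ℕ, 1 ≤ k →
      (p ^ k / (1 + (k : ℝ) * (p * A1) + p * A2) *
            ∏ j ∈ Finset.range k, (((j : ℝ) * A1 + A2) / (1 + (j : ℝ) * (p * A1) + p * A2)))
          * (k : ℝ) ^ (1 + 1 / (p * A1))
      = (1 / (p * A1)) * ((k : ℝ) / (a + k)) *
          (Real.GammaSeq b k / Real.GammaSeq a k) := by
    intro k hk
    have hk0 : (0:ℝ) < k := by exact_mod_cast hk
    have hPa : 0 < ∏ j ∈ Finset.range k, (a + (j:ℝ)) :=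
      Finset.prod_pos fun j _ => by positivity
    have hPb : 0 < ∏ j ∈ Finset.range k, (b + (j:ℝ)) :=
      Finset.prod_pos fun j _ => by positivity
    have hfact : (0:ℝ) < (Nat.factorial k : ℝ) := by positivity
    have hprod : ∏ j ∈ Finset.range k,
        (((j : ℝ) * A1 + A2) / (1 + (j : ℝ) * (p * A1) + p * A2))
        = (1/p)^k * ((∏ j ∈ Finset.range k, (a + (j:ℝ))) /
            (∏ j ∈ Finset.range k, (b + (j:ℝ)))) := by
      rw [← Finset.prod_div_distrib,
        show ((1:ℝ)/p)^k = ∏ _j ∈ Finset.range k, ((1:ℝ)/p) by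
          rw [Finset.prod_const, Finset.card_range],
        ← Finset.prod_mul_distrib]
      refine Finset.prod_congr rfl fun j _ => ?_
      have hbj : 1 + (j:ℝ) * (p*A1) + p*A2 = (p*A1) * (b + j) := by
        rw [hb_def, ha_def]; field_simp; ring
      have haj : (j:ℝ)*A1 + A2 = A1 * (a + j) := by rw [ha_def]; field_simp; ring
      have hbj0 : (0:ℝ) < b + j := by positivity
      rw [haj, hbj]
      field_simp
    have hden : 1 + (k : ℝ) * (p * A1) + p * A2 = (p*A1) * (b + k) := by
      rw [hb_def, ha_def]; field_simp; ring
    have hrpow1 : (k:ℝ) ^ ((1:ℝ) + 1/(p*A1)) = (k:ℝ) * (k:ℝ) ^ (1/(p*A1)) := by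
      rw [Real.rpow_add hk0, Real.rpow_one]
    have hrpow2 : (k:ℝ) ^ b = (k:ℝ) ^ a * (k:ℝ) ^ (1/(p*A1)) := by
      rw [hb_def, Real.rpow_add hk0]
    have hppow : (0:ℝ) < p ^ k := by positivity
    have hka : (0:ℝ) < (k:ℝ) ^ a := Real.rpow_pos_of_pos hk0 a
    have hkc : (0:ℝ) < (k:ℝ) ^ (1/(p*A1)) := Real.rpow_pos_of_pos hk0 _
    have hak : (0:ℝ) < a + k := by positivity
    have hbk : (0:ℝ) < b + k := by positivity
    rw [Real.GammaSeq, Real.GammaSeq, Finset.prod_range_succ, Finset.prod_range_succ,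
      hprod, hden, hrpow1, hrpow2]
    field_simp
    ring
    rw [← mul_pow, mul_inv_cancel₀ hp', one_pow]
  have hΓa : Real.Gamma a ≠ 0 := (Real.Gamma_pos_of_pos ha).ne'
  have hquot : Tendsto (fun k : ℕ => Real.GammaSeq b k / Real.GammaSeq a k) atTop
      (nhds (Real.Gamma b / Real.Gamma a)) :=
    (Real.GammaSeq_tendsto_Gamma b).div (Real.GammaSeq_tendsto_Gamma a) hΓa
  have hfrac : Tendsto (fun k : ℕ => (k:ℝ) / (a + k)) atTop (nhds 1) := by
    have := tendsto_natCast_div_add_atTop (𝕜 := ℝ) a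
    refine this.congr fun k => by rw [add_comm]
  have h1 : Tendsto (fun k : ℕ => (1 / (p * A1)) * ((k : ℝ) / (a + k)) *
      (Real.GammaSeq b k / Real.GammaSeq a k)) atTop
      (nhds ((1 / (p * A1)) * 1 * (Real.Gamma b / Real.Gamma a))) :=
    (tendsto_const_nhds.mul hfrac).mul hquot
  rw [mul_one] at h1
  refine Tendsto.congr' ?_ h1
  filter_upwards [eventually_ge_atTop 1] with k hk
  exact (key k hk).symm
end

section
/- Fix reals p ∈ (0,1] and A_1 > 0 with pA_1 < 1, a constant c > 0, and α ∈ (0,1). For n a positive integer, set k_max(n) = n^{1−α}/A_1. Then, as n → ∞, ∑_{k ∈ ℕ, k ≥ k_max(n)} c·k^{−1−1/(pA_1)}·n·(k − p·n^{1−α}) = (1+o(1)) · c · (p·A_1^{1/(pA_1)}/(1−pA_1)) · n^{2−1/(pA_1)+α(1−pA_1)/(pA_1)} · (1 − pA_1·(1−pA_1)). -/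
open Filter Real

/-- Integral comparison bounds for x^(-s) on [a,b]. -/
lemma spa_integral_bounds (s a b : ℝ) (hs : 1 < s) (ha : 0 < a) (hab : a ≤ b) :
    b ^ (-s) * (b - a) ≤ (a ^ (1 - s) - b ^ (1 - s)) / (s - 1) ∧
      (a ^ (1 - s) - b ^ (1 - s)) / (s - 1) ≤ a ^ (-s) * (b - a) := by
  have hb : 0 < b := lt_of_lt_of_le ha hab
  have h0 : (0 : ℝ) ∉ Set.uIcc a b := by
    rw [Set.uIcc_of_le hab]
    intro h
    exact absurd (Set.mem_Icc.mp h).1 (not_le.mpr ha)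
  have hne : (-s) ≠ -1 := by intro h; nlinarith [neg_injective h]
  have hint : ∫ x in a..b, x ^ (-s) = (a ^ (1 - s) - b ^ (1 - s)) / (s - 1) := by
    rw [integral_rpow (Or.inr ⟨hne, h0⟩)]
    have h1 : -s + 1 = 1 - s := by ring
    rw [h1]
    rw [div_eq_div_iff (by linarith) (by linarith)]
    ring
  have hInt : IntervalIntegrable (fun x : ℝ => x ^ (-s)) MeasureTheory.volume a b :=
    intervalIntegral.intervalIntegrable_rpow (Or.inr h0)
  constructor
  · have := intervalIntegral.integral_mono_on hab
      (intervalIntegrable_const (c := b ^ (-s))) hInt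
      (fun x hx => Real.rpow_le_rpow_of_nonpos (lt_of_lt_of_le ha hx.1) hx.2
        (by linarith))
    rw [intervalIntegral.integral_const, smul_eq_mul, hint] at this
    linarith [this]
  · have := intervalIntegral.integral_mono_on hab hInt
      (intervalIntegrable_const (c := a ^ (-s)))
      (fun x hx => Real.rpow_le_rpow_of_nonpos ha hx.1 (by linarith))
    rw [intervalIntegral.integral_const, smul_eq_mul, hint] at this
    linarith [this]


/-- Telescoping sum of (a+k)^r - (a+k+1)^r for r < 0, a > 0. -/
lemma spa_telescope_hasSum (r a : ℝ) (hr : r < 0) (ha : 0 < a) :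
    HasSum (fun k : ℕ => (a + k) ^ r - (a + (k + 1)) ^ r) (a ^ r) := by
  have hpos : ∀ k : ℕ, (0:ℝ) < a + k := fun k => by positivity
  have hnonneg : ∀ k : ℕ, 0 ≤ (a + k) ^ r - (a + (k+1)) ^ r := by
    intro k
    have : (a + ((k:ℝ) + 1)) ^ r ≤ (a + k) ^ r :=
      Real.rpow_le_rpow_of_nonpos (hpos k) (by linarith) hr.le
    linarith
  rw [hasSum_iff_tendsto_nat_of_nonneg (fun k => hnonneg k)]
  have htel : ∀ n : ℕ, ∑ k ∈ Finset.range n, ((a + k) ^ r - (a + (k+1)) ^ r)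
      = (a + (0:ℕ)) ^ r - (a + n) ^ r := by
    intro n
    have := Finset.sum_range_sub' (f := fun k : ℕ => (a + k) ^ r) n
    simpa using this
  simp only [htel, Nat.cast_zero, add_zero]
  have h1 : Tendsto (fun n : ℕ => (a + n) ^ r) atTop (nhds 0) := by
    have h2 : Tendsto (fun n : ℕ => a + (n:ℝ)) atTop atTop :=
      tendsto_atTop_add_const_left _ _ tendsto_natCast_atTop_atTop
    have h3 : Tendsto (fun x : ℝ => x ^ (-(-r))) atTop (nhds 0) :=
      tendsto_rpow_neg_atTop (by linarith)
    simpa [Function.comp_def] using h3.comp h2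
  simpa using (tendsto_const_nhds (x := a ^ r)).sub h1

/-- Tail sum bounds for ∑_{k≥m} k^{-s}, s > 1, m ≥ 2 (as shifted sum). -/
lemma spa_tail_bounds (s : ℝ) (hs : 1 < s) (M : ℝ) (hM : 2 ≤ M) :
    Summable (fun k : ℕ => (M + k) ^ (-s)) ∧
      M ^ (1 - s) / (s - 1) ≤ ∑' k : ℕ, (M + k) ^ (-s) ∧
      (∑' k : ℕ, (M + k) ^ (-s)) ≤ (M - 1) ^ (1 - s) / (s - 1) := by
  have hM0 : (0:ℝ) < M := by linarith
  have hM1 : (0:ℝ) < M - 1 := by linarith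
  -- upper comparison sequence
  have hg : HasSum (fun k : ℕ => ((M - 1 + k) ^ (1-s) - (M - 1 + (k+1)) ^ (1-s)) / (s-1))
      ((M - 1) ^ (1-s) / (s-1)) :=
    (spa_telescope_hasSum (1-s) (M-1) (by linarith) hM1).div_const _
  have hh : HasSum (fun k : ℕ => ((M + k) ^ (1-s) - (M + (k+1)) ^ (1-s)) / (s-1))
      (M ^ (1-s) / (s-1)) :=
    (spa_telescope_hasSum (1-s) M (by linarith) hM0).div_const _
  have hfle : ∀ k : ℕ, (M + k) ^ (-s) ≤ ((M - 1 + k) ^ (1-s) - (M - 1 + (k+1)) ^ (1-s)) / (s-1) := by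
    intro k
    have := (spa_integral_bounds s (M - 1 + k) (M + k) hs (by positivity) (by linarith)).1
    have heq : M + (k:ℝ) - (M - 1 + k) = 1 := by ring
    have heq2 : M - 1 + ((k:ℝ)+1) = M + k := by ring
    rw [heq] at this
    rw [heq2]
    simpa using this
  have hlef : ∀ k : ℕ, ((M + k) ^ (1-s) - (M + (k+1)) ^ (1-s)) / (s-1) ≤ (M + k) ^ (-s) := by
    intro k
    have := (spa_integral_bounds s (M + k) (M + (k+1)) hs (by positivity) (by linarith)).2
    have heq : M + ((k:ℝ)+1) - (M + k) = 1 := by ring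
    rw [heq] at this
    simpa using this
  have hfnonneg : ∀ k : ℕ, 0 ≤ (M + k) ^ (-s) := fun k => Real.rpow_nonneg (by positivity) _
  have hsummable : Summable (fun k : ℕ => (M + k) ^ (-s)) :=
    Summable.of_nonneg_of_le hfnonneg hfle hg.summable
  refine ⟨hsummable, ?_, ?_⟩
  · calc M ^ (1-s)/(s-1) = ∑' k : ℕ, ((M + k) ^ (1-s) - (M + (k+1)) ^ (1-s)) / (s-1) :=
          hh.tsum_eq.symm
      _ ≤ ∑' k : ℕ, (M + k) ^ (-s) := Summable.tsum_le_tsum hlef hh.summable hsummable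
  · calc (∑' k : ℕ, (M + k) ^ (-s))
        ≤ ∑' k : ℕ, ((M - 1 + k) ^ (1-s) - (M - 1 + (k+1)) ^ (1-s)) / (s-1) :=
          Summable.tsum_le_tsum hfle hsummable hg.summable
      _ = (M - 1) ^ (1-s)/(s-1) := hg.tsum_eq

set_option maxHeartbeats 2000000 in
/-- For p ∈ (0,1], A₁ > 0 with pA₁ < 1, c > 0 and α ∈ (0,1), with
k_max(n) = n^{1−α}/A₁, as n → ∞:
∑_{k ≥ k_max(n)} c·k^{−1−1/(pA₁)}·n·(k − p·n^{1−α})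
= (1+o(1))·c·(p·A₁^{1/(pA₁)}/(1−pA₁))·n^{2−1/(pA₁)+α(1−pA₁)/(pA₁)}·(1 − pA₁(1−pA₁)). -/
theorem spa_E1_sum_asymptotics (p A1 c α : ℝ) (hp0 : 0 < p) (hp1 : p ≤ 1)
    (hA1 : 0 < A1) (hpA1 : p * A1 < 1) (hc : 0 < c) (hα0 : 0 < α) (hα1 : α < 1)
    (ε : ℝ) (hε : 0 < ε) :
    ∃ n0 : ℕ, ∀ n : ℕ, n0 ≤ n →
      |(∑' k : {k : ℕ // (n : ℝ) ^ (1 - α) / A1 ≤ (k : ℝ)},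
            c * ((k : ℕ) : ℝ) ^ (-1 - 1 / (p * A1)) * (n : ℝ)
              * (((k : ℕ) : ℝ) - p * (n : ℝ) ^ (1 - α)))
          - c * (p * A1 ^ (1 / (p * A1)) / (1 - p * A1))
              * (n : ℝ) ^ (2 - 1 / (p * A1) + α * (1 - p * A1) / (p * A1))
              * (1 - (p * A1) * (1 - p * A1))|
        ≤ ε * (c * (p * A1 ^ (1 / (p * A1)) / (1 - p * A1))
              * (n : ℝ) ^ (2 - 1 / (p * A1) + α * (1 - p * A1) / (p * A1))
              * (1 - (p * A1) * (1 - p * A1))) := by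
  set b : ℝ := p * A1 with hb_def
  have hb0 : 0 < b := mul_pos hp0 hA1
  have hb1 : b < 1 := hpA1
  set s : ℝ := 1 / b with hs_def
  have hs : 1 < s := one_lt_one_div hb0 hb1
  have hsb : s * b = 1 := by rw [hs_def]; field_simp
  set D : ℝ := 1 / (s - 1) - b / s with hD_def
  have hs1 : s - 1 = (1 - b) / b := by rw [hs_def]; field_simp
  have hD_alt : D = b * (1 - b * (1 - b)) / (1 - b) := by
    have h1b : (1:ℝ) - b ≠ 0 := by linarith
    rw [hD_def, hs1, hs_def]
    field_simp
  have hD0 : 0 < D := by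
    rw [hD_alt]
    have h1 : 0 < 1 - b * (1 - b) := by nlinarith
    have h2 : 0 < 1 - b := by linarith
    positivity
  -- K and M as functions of n
  set K : ℕ → ℝ := fun n => (n : ℝ) ^ (1 - α) / A1 with hK_def
  set Mr : ℕ → ℝ := fun n => ((⌈K n⌉₊ : ℕ) : ℝ) with hMr_def
  have hKtop : Tendsto K atTop atTop := by
    apply Tendsto.atTop_div_const hA1
    exact (tendsto_rpow_atTop (by linarith)).comp tendsto_natCast_atTop_atTop
  -- ratio limits
  have hinv : Tendsto (fun n => (K n)⁻¹) atTop (nhds 0) := hKtop.inv_tendsto_atTop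
  have hKev : ∀ᶠ n in atTop, 1 ≤ K n := hKtop.eventually_ge_atTop 1
  have hr1 : Tendsto (fun n => Mr n / K n) atTop (nhds 1) := by
    apply tendsto_of_tendsto_of_tendsto_of_le_of_le' tendsto_const_nhds
      (g := fun _ => (1:ℝ)) (h := fun n => 1 + (K n)⁻¹)
    · have := (tendsto_const_nhds (x := (1:ℝ)) (f := atTop (α := ℕ))).add hinv
      simpa using this
    · filter_upwards [hKev] with n hn
      have hK0 : 0 < K n := by linarith
      rw [le_div_iff₀ hK0, one_mul]
      exact Nat.le_ceil _
    · filter_upwards [hKev] with n hn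
      have hK0 : 0 < K n := by linarith
      rw [div_le_iff₀ hK0]
      have h1 : Mr n < K n + 1 := Nat.ceil_lt_add_one (by linarith)
      have h2 : (1 + (K n)⁻¹) * K n = K n + 1 := by field_simp
      linarith [h2 ▸ h1]
  have hr2 : Tendsto (fun n => (Mr n - 1) / K n) atTop (nhds 1) := by
    apply tendsto_of_tendsto_of_tendsto_of_le_of_le'
      (g := fun n => 1 - (K n)⁻¹) (h := fun _ => (1:ℝ))
    · have := (tendsto_const_nhds (x := (1:ℝ)) (f := atTop (α := ℕ))).sub hinv
      simpa using this
    · exact tendsto_const_nhds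
    · filter_upwards [hKev] with n hn
      have hK0 : 0 < K n := by linarith
      rw [le_div_iff₀ hK0, sub_mul, one_mul, inv_mul_cancel₀ hK0.ne']
      have : K n ≤ Mr n := Nat.le_ceil _
      linarith
    · filter_upwards [hKev] with n hn
      have hK0 : 0 < K n := by linarith
      rw [div_le_iff₀ hK0, one_mul]
      have h1 : Mr n < K n + 1 := Nat.ceil_lt_add_one (by linarith)
      linarith
  -- the two bounding functions tend to D
  set Gl : ℕ → ℝ := fun n => (Mr n / K n) ^ (1 - s) / (s - 1)
      - b * (((Mr n - 1) / K n) ^ (-s)) / s with hGl_def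
  set Gu : ℕ → ℝ := fun n => ((Mr n - 1) / K n) ^ (1 - s) / (s - 1)
      - b * ((Mr n / K n) ^ (-s)) / s with hGu_def
  have hGl : Tendsto Gl atTop (nhds D) := by
    have h1 := (hr1.rpow_const (p := 1 - s) (Or.inl one_ne_zero)).div_const (s - 1)
    have h2 := (((hr2.rpow_const (p := -s) (Or.inl one_ne_zero)).const_mul b).div_const s)
    have := h1.sub h2
    simpa [Real.one_rpow, hD_def] using this
  have hGu : Tendsto Gu atTop (nhds D) := by
    have h1 := (hr2.rpow_const (p := 1 - s) (Or.inl one_ne_zero)).div_const (s - 1)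
    have h2 := (((hr1.rpow_const (p := -s) (Or.inl one_ne_zero)).const_mul b).div_const s)
    have := h1.sub h2
    simpa [Real.one_rpow, hD_def] using this
  -- collect eventual properties
  have hev : ∀ᶠ n : ℕ in atTop, 2 ≤ K n ∧ 1 ≤ n ∧ D - ε * D < Gl n ∧ Gu n < D + ε * D := by
    have e1 := hKtop.eventually_ge_atTop 2
    have e2 := eventually_ge_atTop 1
    have e3 := hGl.eventually_const_lt (by nlinarith : D - ε * D < D)
    have e4 := hGu.eventually_lt_const (by nlinarith : D < D + ε * D)
    filter_upwards [e1, e2, e3, e4] with n h1 h2 h3 h4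
    exact ⟨h1, h2, h3, h4⟩
  obtain ⟨n0, hn0⟩ := eventually_atTop.mp hev
  refine ⟨n0, fun n hn => ?_⟩
  obtain ⟨hK2, hn1, hGln, hGun⟩ := hn0 n hn
  -- fixed n: notation
  have hK0 : 0 < K n := by linarith
  have hKM : K n ≤ Mr n := Nat.le_ceil _
  have hM2 : 2 ≤ Mr n := le_trans hK2 hKM
  have hM0 : 0 < Mr n := by linarith
  have hM10 : 0 < Mr n - 1 := by linarith
  have hn0' : (0:ℝ) < n := by exact_mod_cast hn1
  have hcn : 0 < c * (n:ℝ) := mul_pos hc hn0'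
  -- p * n^(1-α) = b * K n
  have hpn : p * (n:ℝ) ^ (1 - α) = b * K n := by
    rw [hK_def]; field_simp [hb_def]; ring
  -- tail sums
  obtain ⟨hsum1, hlb1, hub1⟩ := spa_tail_bounds s hs (Mr n) hM2
  obtain ⟨hsum2, hlb2, hub2⟩ := spa_tail_bounds (s + 1) (by linarith) (Mr n) hM2
  rw [show (1:ℝ) - (s+1) = -s by ring, show s + 1 - 1 = s by ring] at hlb2 hub2
  set T1 : ℝ := ∑' k : ℕ, (Mr n + k) ^ (-s) with hT1_def
  set T2 : ℝ := ∑' k : ℕ, (Mr n + k) ^ (-(s+1)) with hT2_def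
  -- rewrite the subtype tsum
  set mn : ℕ := ⌈K n⌉₊ with hmn_def
  have heq : (∑' k : {k : ℕ // (n : ℝ) ^ (1 - α) / A1 ≤ (k : ℝ)},
        c * ((k : ℕ) : ℝ) ^ (-1 - s) * (n : ℝ)
          * (((k : ℕ) : ℝ) - p * (n : ℝ) ^ (1 - α)))
      = c * (n:ℝ) * T1 - (c * (n:ℝ) * b * K n) * T2 := by
    let e : ℕ ≃ {k : ℕ // (n : ℝ) ^ (1 - α) / A1 ≤ (k : ℝ)} :=
      { toFun := fun j => ⟨mn + j, by
          show K n ≤ _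
          push_cast
          have : K n ≤ (mn : ℝ) := Nat.le_ceil _
          have h2 : (0:ℝ) ≤ j := Nat.cast_nonneg j
          linarith⟩
        invFun := fun k => k.1 - mn
        left_inv := fun j => by simp
        right_inv := fun k => by
          have : mn ≤ k.1 := Nat.ceil_le.mpr k.2
          exact Subtype.ext (Nat.add_sub_cancel' this) }
    rw [← Equiv.tsum_eq e]
    have hterm : ∀ j : ℕ, (c * (((e j : ℕ) : ℕ) : ℝ) ^ (-1 - s) * (n : ℝ)
          * ((((e j : ℕ) : ℕ) : ℝ) - p * (n : ℝ) ^ (1 - α)))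
        = c * (n:ℝ) * ((Mr n + j) ^ (-s)) - (c * (n:ℝ) * b * K n) * ((Mr n + j) ^ (-(s+1))) := by
      intro j
      have hcast : (((e j : ℕ) : ℕ) : ℝ) = Mr n + j := by
        show ((mn + j : ℕ) : ℝ) = Mr n + (j : ℝ)
        push_cast [hMr_def]
        ring
      rw [hcast, hpn]
      have hx : (0:ℝ) < Mr n + j := by positivity
      have hpow : (Mr n + j) ^ (-1 - s) = (Mr n + j) ^ (-(s+1)) := by
        rw [show -1 - s = -(s+1) by ring]
      have hpow2 : (Mr n + j) ^ (-(s+1)) * (Mr n + j) = (Mr n + j) ^ (-s) := by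
        rw [← Real.rpow_add_one hx.ne' (-(s+1)), show -(s+1) + 1 = -s by ring]
      rw [hpow]
      calc c * (Mr n + j) ^ (-(s+1)) * n * ((Mr n + j) - b * K n)
          = c * n * ((Mr n + j) ^ (-(s+1)) * (Mr n + j))
            - (c * n * b * K n) * ((Mr n + j) ^ (-(s+1))) := by ring
        _ = _ := by rw [hpow2]
    rw [tsum_congr hterm, Summable.tsum_sub (hsum1.mul_left _) (hsum2.mul_left _),
      tsum_mul_left, tsum_mul_left]
  -- the target value V
  have hE : 2 - s + α * (1 - b) / b = 1 + (1 - α) * (1 - s) := by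
    rw [hs_def]; field_simp; ring
  have hKpow : (K n) ^ (1 - s) = (n:ℝ) ^ ((1 - α) * (1 - s)) * A1 ^ (s - 1) := by
    show ((n:ℝ) ^ (1 - α) / A1) ^ (1 - s) = _
    rw [Real.div_rpow (Real.rpow_nonneg (Nat.cast_nonneg n) _) hA1.le]
    rw [← Real.rpow_mul (Nat.cast_nonneg n)]
    rw [div_eq_mul_inv, ← Real.rpow_neg hA1.le, show -(1 - s) = s - 1 by ring]
  have hA1s : A1 ^ s = A1 ^ (s - 1) * A1 := by
    rw [← Real.rpow_add_one hA1.ne' (s - 1), sub_add_cancel]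
  have hDval : p * A1 * (1 - b * (1 - b)) / (1 - b) = D := by
    rw [hD_alt, hb_def]
  have hV : c * (p * A1 ^ s / (1 - b)) * (n:ℝ) ^ (2 - s + α * (1 - b) / b)
        * (1 - b * (1 - b)) = c * (n:ℝ) * (K n) ^ (1 - s) * D := by
    rw [hE, Real.rpow_add hn0', Real.rpow_one, hKpow, hA1s, ← hDval]
    ring
  -- bounds on the sum
  have hcnbK : 0 ≤ c * (n:ℝ) * b * K n := by positivity
  have hL : c * (n:ℝ) * (Mr n ^ (1-s) / (s-1)) - (c * (n:ℝ) * b * K n) * ((Mr n - 1) ^ (-s) / s)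
      ≤ c * (n:ℝ) * T1 - (c * (n:ℝ) * b * K n) * T2 := by
    have h1 := mul_le_mul_of_nonneg_left hlb1 hcn.le
    have h2 := mul_le_mul_of_nonneg_left hub2 hcnbK
    linarith
  have hU : c * (n:ℝ) * T1 - (c * (n:ℝ) * b * K n) * T2
      ≤ c * (n:ℝ) * ((Mr n - 1) ^ (1-s) / (s-1)) - (c * (n:ℝ) * b * K n) * (Mr n ^ (-s) / s) := by
    have h1 := mul_le_mul_of_nonneg_left hub1 hcn.le
    have h2 := mul_le_mul_of_nonneg_left hlb2 hcnbK
    linarith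
  -- identities L = c n K^{1-s} Gl and U = c n K^{1-s} Gu
  have hKM1 : (K n) ^ (1-s) * (Mr n / K n) ^ (1-s) = Mr n ^ (1-s) := by
    have h : K n * (Mr n / K n) = Mr n := by field_simp
    rw [← Real.mul_rpow hK0.le (div_nonneg hM0.le hK0.le), h]
  have hKM1' : (K n) ^ (1-s) * ((Mr n - 1) / K n) ^ (1-s) = (Mr n - 1) ^ (1-s) := by
    have h : K n * ((Mr n - 1) / K n) = Mr n - 1 := by field_simp
    rw [← Real.mul_rpow hK0.le (div_nonneg hM10.le hK0.le), h]
  have hsplit : (K n) ^ (1-s) = (K n) ^ (-s) * K n := by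
    rw [show (1:ℝ) - s = -s + 1 by ring, Real.rpow_add_one hK0.ne' (-s)]
  have hKM2 : (K n) ^ (1-s) * ((Mr n - 1) / K n) ^ (-s) = K n * (Mr n - 1) ^ (-s) := by
    have h : K n * ((Mr n - 1) / K n) = Mr n - 1 := by field_simp
    rw [hsplit]
    rw [show (K n) ^ (-s) * K n * ((Mr n - 1) / K n) ^ (-s)
        = K n * ((K n) ^ (-s) * ((Mr n - 1) / K n) ^ (-s)) by ring]
    rw [← Real.mul_rpow hK0.le (div_nonneg hM10.le hK0.le), h]
  have hKM2' : (K n) ^ (1-s) * (Mr n / K n) ^ (-s) = K n * Mr n ^ (-s) := by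
    have h : K n * (Mr n / K n) = Mr n := by field_simp
    rw [hsplit]
    rw [show (K n) ^ (-s) * K n * (Mr n / K n) ^ (-s)
        = K n * ((K n) ^ (-s) * (Mr n / K n) ^ (-s)) by ring]
    rw [← Real.mul_rpow hK0.le (div_nonneg hM0.le hK0.le), h]
  have hs1ne : s - 1 ≠ 0 := ne_of_gt (by linarith : (0:ℝ) < s - 1)
  have hsne : s ≠ 0 := ne_of_gt (by linarith : (0:ℝ) < s)
  have hLeq : c * (n:ℝ) * (Mr n ^ (1-s) / (s-1)) - (c * (n:ℝ) * b * K n) * ((Mr n - 1) ^ (-s) / s)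
      = c * (n:ℝ) * (K n) ^ (1-s) * Gl n := by
    rw [hGl_def]
    linear_combination (-(c * (n:ℝ)) / (s-1)) * hKM1 + (c * (n:ℝ) * b / s) * hKM2
  have hUeq : c * (n:ℝ) * ((Mr n - 1) ^ (1-s) / (s-1)) - (c * (n:ℝ) * b * K n) * (Mr n ^ (-s) / s)
      = c * (n:ℝ) * (K n) ^ (1-s) * Gu n := by
    rw [hGu_def]
    linear_combination (-(c * (n:ℝ)) / (s-1)) * hKM1' + (c * (n:ℝ) * b / s) * hKM2'
  -- conclude
  rw [heq, hV]
  have hP : 0 < c * (n:ℝ) * (K n) ^ (1-s) := by positivity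
  rw [abs_le]
  constructor
  · have h4 := mul_le_mul_of_nonneg_left hGln.le hP.le
    rw [hLeq] at hL
    have h5 : c * (n:ℝ) * (K n) ^ (1-s) * (D - ε * D)
        = c * (n:ℝ) * (K n) ^ (1-s) * D - ε * (c * (n:ℝ) * (K n) ^ (1-s) * D) := by ring
    linarith
  · have h4 := mul_le_mul_of_nonneg_left hGun.le hP.le
    rw [hUeq] at hU
    have h5 : c * (n:ℝ) * (K n) ^ (1-s) * (D + ε * D)
        = c * (n:ℝ) * (K n) ^ (1-s) * D + ε * (c * (n:ℝ) * (K n) ^ (1-s) * D) := by ring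
    linarith
end
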